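/- Let c₁ be the real root of c₁³ + (27/4)c₁ - 27/8 = 0 and b₁ = √(9/4 + c₁²/3). Then the 3×3 matrix A = [[-c₁/3 + ib₁, -1, -1/2], [-1, 2c₁/3, -1], [-1/2, -1, -c₁/3 - ib₁]] has a first column and third column that are linearly independent over ℂ; in particular rank(A) ≥ 2. -/

import Mathlib

open Complex Matrix

theorem stmt_7 (c₁ b₁ : ℝ)
    (hc : c₁ ^ 3 + 27 / 4 * c₁ - 27 / 8 = 0)
    (hb : b₁ = Real.sqrt (9 / 4 + c₁ ^ 2 / 3))
    (A : Matrix (Fin 3) (Fin 3) ℂ)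
    (hA : A = !![-(c₁ : ℂ) / 3 + (b₁ : ℂ) * I, -1, -1/2;
                 -1, 2 * (c₁ : ℂ) / 3, -1;
                 -1/2, -1, -(c₁ : ℂ) / 3 - (b₁ : ℂ) * I]) :
    LinearIndependent ℂ ![(fun i => A i 0 : Fin 3 → ℂ), (fun i => A i 2 : Fin 3 → ℂ)] ∧
    2 ≤ A.rank := by
  have hbpos : 0 < b₁ := by
    rw [hb]
    apply Real.sqrt_pos.mpr
    positivity
  subst hA
  have hli : LinearIndependent ℂ ![(fun i => (!![-(c₁ : ℂ) / 3 + (b₁ : ℂ) * I, -1, -1/2;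
                 -1, 2 * (c₁ : ℂ) / 3, -1;
                 -1/2, -1, -(c₁ : ℂ) / 3 - (b₁ : ℂ) * I]) i 0 : Fin 3 → ℂ),
        (fun i => (!![-(c₁ : ℂ) / 3 + (b₁ : ℂ) * I, -1, -1/2;
                 -1, 2 * (c₁ : ℂ) / 3, -1;
                 -1/2, -1, -(c₁ : ℂ) / 3 - (b₁ : ℂ) * I]) i 2 : Fin 3 → ℂ)] := by
    rw [LinearIndependent.pair_iff]
    intro s t hst
    have h1 := congrFun hst 1
    have h0 := congrFun hst 0
    simp [Matrix.cons_val_zero, Matrix.cons_val_one] at h1 h0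
    -- h1 : s * (-1) + t * (-1) = 0
    have hts : t = -s := by linear_combination -h1
    subst hts
    -- h0 : s * (-c/3 + bI) + (-s) * (-1/2) = 0
    have hs0 : s = 0 := by
      by_contra hs
      have key : s * (-2 * (c₁:ℂ) + 6 * (b₁:ℂ) * I + 3) = 0 := by
        linear_combination (6 : ℂ) * h0
      rcases mul_eq_zero.mp key with h | h
      · exact hs h
      · have him := congrArg Complex.im h
        simp at him
        exact absurd him (ne_of_gt hbpos)
    exact ⟨hs0, by simp [hs0]⟩
  refine ⟨hli, ?_⟩
  rw [Matrix.rank_eq_finrank_span_cols]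
  have hsub : Submodule.span ℂ (Set.range ![(fun i => (!![-(c₁ : ℂ) / 3 + (b₁ : ℂ) * I, -1, -1/2;
                 -1, 2 * (c₁ : ℂ) / 3, -1;
                 -1/2, -1, -(c₁ : ℂ) / 3 - (b₁ : ℂ) * I]) i 0 : Fin 3 → ℂ),
        (fun i => (!![-(c₁ : ℂ) / 3 + (b₁ : ℂ) * I, -1, -1/2;
                 -1, 2 * (c₁ : ℂ) / 3, -1;
                 -1/2, -1, -(c₁ : ℂ) / 3 - (b₁ : ℂ) * I]) i 2 : Fin 3 → ℂ)]) ≤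
      Submodule.span ℂ (Set.range (!![-(c₁ : ℂ) / 3 + (b₁ : ℂ) * I, -1, -1/2;
                 -1, 2 * (c₁ : ℂ) / 3, -1;
                 -1/2, -1, -(c₁ : ℂ) / 3 - (b₁ : ℂ) * I])ᵀ) := by
    apply Submodule.span_mono
    rintro _ ⟨j, rfl⟩
    fin_cases j
    · exact ⟨0, rfl⟩
    · exact ⟨2, rfl⟩
  have := Submodule.finrank_mono hsub
  rw [finrank_span_eq_card hli] at this
  simp at this
  exact this
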